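/- arXiv:1710.01575 — 5 statements merged into one kernel-verified Lean document; each statement's English description precedes it below -/
import Mathlib

section
/- For every integer n ≥ 2 and every real q with 0 < q ≤ 1 - 1/n, the infinite product Π_{m=1}^∞ (1 - q^m) satisfies Π_{m=1}^∞ (1 - q^m) ≥ e^{(π²/6)(1-n)}. -/
open Real

theorem tprod_one_sub_pow_ge (n : ℕ) (hn : 2 ≤ n) (q : ℝ) (hq0 : 0 < q)
    (hqn : q ≤ 1 - 1 / n) :
    ∏' m : ℕ, (1 - q ^ (m + 1)) ≥ Real.exp (π ^ 2 / 6 * (1 - n)) := by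
  have hn0 : (0:ℝ) < n := by positivity
  have hn2 : (2:ℝ) ≤ n := by exact_mod_cast hn
  have hq1 : q < 1 := by
    have : (0:ℝ) < 1 / n := by positivity
    linarith
  have h1q : 1 / (n:ℝ) ≤ 1 - q := by linarith
  have h1q0 : (0:ℝ) < 1 - q := by
    have : (0:ℝ) < 1 / n := by positivity
    linarith
  -- powers of q are < 1
  have hpow1 : ∀ j : ℕ, q ^ (j + 1) < 1 := fun j => pow_lt_one₀ hq0.le hq1 (Nat.succ_ne_zero j)
  have hpowpos : ∀ j : ℕ, (0:ℝ) < 1 - q ^ (j + 1) := fun j => by linarith [hpow1 j]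
  -- the double-indexed family
  set f : ℕ × ℕ → ℝ := fun p => q ^ ((p.2 + 1) * (p.1 + 1)) / ((p.1:ℝ) + 1) with hf_def
  have hfpos : ∀ p : ℕ × ℕ, 0 ≤ f p := fun p => by positivity
  -- rows (fixed k) are geometric
  have hgsum : ∀ k : ℕ, HasSum (fun m => f (k, m))
      (q ^ (k + 1) / (1 - q ^ (k + 1)) / ((k:ℝ) + 1)) := by
    intro k
    have hr0 : (0:ℝ) ≤ q ^ (k + 1) := by positivity
    have h := (hasSum_geometric_of_lt_one hr0 (hpow1 k)).mul_right
      (q ^ (k + 1) / ((k:ℝ) + 1))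
    have hfun : (fun m => f (k, m))
        = fun i : ℕ => (q ^ (k + 1)) ^ i * (q ^ (k + 1) / ((k:ℝ) + 1)) := by
      funext m
      show q ^ ((m + 1) * (k + 1)) / ((k:ℝ) + 1) = _
      rw [pow_mul, pow_succ]
      ring
    have hne : (1 - q ^ (k + 1)) ≠ 0 := (hpowpos k).ne'
    have hval : q ^ (k + 1) / (1 - q ^ (k + 1)) / ((k:ℝ) + 1)
        = (1 - q ^ (k + 1))⁻¹ * (q ^ (k + 1) / ((k:ℝ) + 1)) := by
      field_simp
    rw [hfun, hval]
    exact h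
  have hrow : ∀ k : ℕ, Summable fun m => f (k, m) := fun k => (hgsum k).summable
  -- column sum bound
  have hkey : ∀ k : ℕ, q ^ (k + 1) / (1 - q ^ (k + 1)) ≤ ((n:ℝ) - 1) / ((k:ℝ) + 1) := by
    intro k
    rw [div_le_div_iff₀ (hpowpos k) (by positivity)]
    -- need: q^(k+1) * (k+1) ≤ (n-1) * (1 - q^(k+1))
    have hgeom : (1 - q) * ∑ i ∈ Finset.range (k + 1), q ^ i = 1 - q ^ (k + 1) := by
      have := geom_sum_mul q (k + 1)
      linarith [this]
    have hsum_ge : ((k:ℝ) + 1) * q ^ k ≤ ∑ i ∈ Finset.range (k + 1), q ^ i := by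
      have : ∀ i ∈ Finset.range (k + 1), q ^ k ≤ q ^ i := by
        intro i hi
        exact pow_le_pow_of_le_one hq0.le hq1.le (Nat.lt_succ_iff.mp (Finset.mem_range.mp hi))
      calc ((k:ℝ) + 1) * q ^ k = (k + 1 : ℕ) • q ^ k := by
            simp [nsmul_eq_mul]
        _ ≤ ∑ i ∈ Finset.range (k + 1), q ^ i := by
            have := Finset.card_nsmul_le_sum (Finset.range (k + 1)) (fun i => q ^ i) (q ^ k) this
            simpa using this
    have hlb : ((k:ℝ) + 1) * q ^ k * (1 - q) ≤ 1 - q ^ (k + 1) := by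
      calc ((k:ℝ) + 1) * q ^ k * (1 - q) = (1 - q) * (((k:ℝ) + 1) * q ^ k) := by ring
        _ ≤ (1 - q) * ∑ i ∈ Finset.range (k + 1), q ^ i :=
            mul_le_mul_of_nonneg_left hsum_ge h1q0.le
        _ = 1 - q ^ (k + 1) := hgeom
    -- q * n ≤ n - 1
    have hqn' : q * n ≤ (n:ℝ) - 1 := by
      have := mul_le_mul_of_nonneg_right hqn hn0.le
      calc q * n ≤ (1 - 1/(n:ℝ)) * n := by linarith [this]
        _ = (n:ℝ) - 1 := by field_simp
    -- (n-1)(1-q^{k+1}) ≥ (n-1)(k+1) q^k (1-q) ≥ (k+1) q^k (n-1)/n ≥ (k+1) q^k q = (k+1) q^{k+1}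
    have hqk : (0:ℝ) ≤ q ^ k := by positivity
    have h1 : ((n:ℝ) - 1) * (((k:ℝ) + 1) * q ^ k * (1 - q)) ≤ ((n:ℝ) - 1) * (1 - q ^ (k + 1)) :=
      mul_le_mul_of_nonneg_left hlb (by linarith)
    have h2 : q ^ (k + 1) * ((k:ℝ) + 1) ≤ ((n:ℝ) - 1) * (((k:ℝ) + 1) * q ^ k * (1 - q)) := by
      have hk1 : (0:ℝ) ≤ (k:ℝ) + 1 := by positivity
      have base : q ≤ ((n:ℝ) - 1) * (1 - q) := by
        have h3 : ((n:ℝ) - 1) * (1 / n) ≤ ((n:ℝ) - 1) * (1 - q) :=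
          mul_le_mul_of_nonneg_left h1q (by linarith)
        have h4 : q ≤ ((n:ℝ) - 1) * (1 / n) := by
          rw [mul_one_div, le_div_iff₀ hn0]
          linarith [hqn']
        linarith
      calc q ^ (k + 1) * ((k:ℝ) + 1) = (((k:ℝ) + 1) * q ^ k) * q := by rw [pow_succ]; ring
        _ ≤ (((k:ℝ) + 1) * q ^ k) * (((n:ℝ) - 1) * (1 - q)) := by
            apply mul_le_mul_of_nonneg_left base (by positivity)
        _ = ((n:ℝ) - 1) * (((k:ℝ) + 1) * q ^ k * (1 - q)) := by ring
    linarith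
  -- row sums bounded by Basel terms
  have hrowsum_le : ∀ k : ℕ, ∑' m, f (k, m) ≤ ((n:ℝ) - 1) * (1 / ((k:ℝ) + 1) ^ 2) := by
    intro k
    rw [(hgsum k).tsum_eq]
    have hk1 : (0:ℝ) < (k:ℝ) + 1 := by positivity
    calc q ^ (k + 1) / (1 - q ^ (k + 1)) / ((k:ℝ) + 1)
        ≤ (((n:ℝ) - 1) / ((k:ℝ) + 1)) / ((k:ℝ) + 1) :=
          (div_le_div_iff_of_pos_right hk1).mpr (hkey k)
      _ = ((n:ℝ) - 1) * (1 / ((k:ℝ) + 1) ^ 2) := by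
          rw [div_div, mul_one_div, sq]
  -- Basel sum shifted
  have hBasel0 : HasSum (fun k : ℕ => 1 / ((k:ℝ) + 1) ^ 2) (π ^ 2 / 6) := by
    have h : HasSum (fun k : ℕ => (1:ℝ) / ((k + 1 : ℕ):ℝ) ^ 2) (π ^ 2 / 6) := by
      rw [hasSum_nat_add_iff (f := fun n : ℕ => (1:ℝ) / (n:ℝ) ^ 2) 1]
      simpa using hasSum_zeta_two
    have he : (fun k : ℕ => (1:ℝ) / ((k + 1 : ℕ):ℝ) ^ 2)
        = fun k : ℕ => 1 / ((k:ℝ) + 1) ^ 2 := by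
      funext k; norm_cast
    rwa [he] at h
  have hBasel : HasSum (fun k : ℕ => ((n:ℝ) - 1) * (1 / ((k:ℝ) + 1) ^ 2))
      (((n:ℝ) - 1) * (π ^ 2 / 6)) := hBasel0.mul_left _
  -- summability of the whole family
  have hsumrows : Summable fun k => ∑' m, f (k, m) :=
    Summable.of_nonneg_of_le (fun k => tsum_nonneg (fun m => hfpos _)) hrowsum_le hBasel.summable
  have hf : Summable f := (summable_prod_of_nonneg hfpos).mpr ⟨hrow, hsumrows⟩
  -- log expansion: for each m, the k-sum of f (k,m) is -log(1 - q^(m+1))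
  have hlog : ∀ m : ℕ, HasSum (fun k => f (k, m)) (-Real.log (1 - q ^ (m + 1))) := by
    intro m
    have habs : |q ^ (m + 1)| < 1 := by
      rw [abs_of_pos (by positivity)]
      exact hpow1 m
    have h := hasSum_pow_div_log_of_abs_lt_one habs
    convert h using 2 with k
    show q ^ ((m + 1) * (k + 1)) / ((k:ℝ) + 1) = _
    rw [pow_mul]
  -- the swapped family
  have hg : Summable fun p : ℕ × ℕ => f p.swap := hf.prod_symm
  have hgpos : ∀ p : ℕ × ℕ, 0 ≤ f p.swap := fun p => hfpos _
  have hLsummable : Summable fun m => ∑' k, f (k, m) := by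
    have := (summable_prod_of_nonneg (f := fun p : ℕ × ℕ => f p.swap) hgpos).mp hg
    exact this.2
  have hLsummable' : Summable fun m => -Real.log (1 - q ^ (m + 1)) := by
    have : (fun m => -Real.log (1 - q ^ (m + 1))) = fun m => ∑' k, f (k, m) := by
      funext m; exact ((hlog m).tsum_eq).symm
    rw [this]; exact hLsummable
  have hLsum : Summable fun m => Real.log (1 - q ^ (m + 1)) := by
    simpa using hLsummable'.neg
  -- the swap and bound
  have hswap : ∑' m, ∑' k, f (k, m) = ∑' k, ∑' m, f (k, m) :=
    Summable.tsum_comm (f := fun k m => f (k, m)) (by exact hf)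
  have hbound : ∑' m, -Real.log (1 - q ^ (m + 1)) ≤ ((n:ℝ) - 1) * (π ^ 2 / 6) := by
    have h1 : ∑' m, -Real.log (1 - q ^ (m + 1)) = ∑' m, ∑' k, f (k, m) := by
      congr 1; funext m; exact ((hlog m).tsum_eq).symm
    rw [h1, hswap]
    calc ∑' k, ∑' m, f (k, m) ≤ ∑' k : ℕ, ((n:ℝ) - 1) * (1 / ((k:ℝ) + 1) ^ 2) :=
          Summable.tsum_le_tsum hrowsum_le hsumrows hBasel.summable
      _ = ((n:ℝ) - 1) * (π ^ 2 / 6) := hBasel.tsum_eq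
  -- conclude via exp
  set S := ∑' m, Real.log (1 - q ^ (m + 1)) with hS
  have hprod : HasProd (fun m : ℕ => 1 - q ^ (m + 1)) (Real.exp S) := by
    have h := hLsum.hasSum.rexp
    have he : (rexp ∘ fun m => Real.log (1 - q ^ (m + 1)))
        = fun m : ℕ => 1 - q ^ (m + 1) := by
      funext m
      simp only [Function.comp]
      exact Real.exp_log (hpowpos m)
    rwa [he] at h
  rw [hprod.tprod_eq]
  rw [ge_iff_le, Real.exp_le_exp]
  have hnegS : -S = ∑' m, -Real.log (1 - q ^ (m + 1)) := by
    rw [tsum_neg]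
  have : -S ≤ ((n:ℝ) - 1) * (π ^ 2 / 6) := by rw [hnegS]; exact hbound
  nlinarith [this]
end

section
/- Let n ≥ 2 be an integer, let q ∈ (1 - 1/(n-1), 1 - 1/n] (with the convention that the interval is (0, 1/2] when n = 2), let b ≥ 1.5 be real, and let z ∈ ℂ with |Im z| ≥ b. Then the infinite product Π_{m=1}^∞ |1 + q^{m-1}/z| satisfies Π_{m=1}^∞ |1 + q^{m-1}/z| ≥ e^{-n(b+1)/b²}. -/
private lemma log_lower_aux (b x F : ℝ) (hb : 1.5 ≤ b) (hx0 : 0 < x) (hx1 : x ≤ 1)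
    (hF : 0 < F) (hsqF : 1 - x / b ≤ F ^ 2) : -(x / (2 * (b - 1))) ≤ Real.log F := by
  have hb0 : (0:ℝ) < b := by linarith
  have hbx : (0:ℝ) < b - x := by linarith
  have hy : (0:ℝ) < 1 - x / b := by
    rw [sub_pos, div_lt_one hb0]; linarith
  have hlog1 : -(x / b / (1 - x / b)) ≤ Real.log (1 - x / b) := by
    have h := Real.log_le_sub_one_of_pos (x := (1 - x / b)⁻¹) (inv_pos.2 hy)
    rw [Real.log_inv] at h
    have heq : (1 - x / b)⁻¹ - 1 = (x / b) / (1 - x / b) := by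
      field_simp
      ring
    rw [heq] at h
    linarith
  have h2 : 2 * Real.log F = Real.log (F ^ 2) := by
    rw [Real.log_pow]; push_cast; ring
  have h3 : Real.log (1 - x / b) ≤ Real.log (F ^ 2) := Real.log_le_log hy hsqF
  have h4 : x / b / (1 - x / b) = x / (b - x) := by
    rw [div_div]
    congr 1
    field_simp
  have h5 : x / (b - x) ≤ x / (b - 1) := by
    apply div_le_div_of_nonneg_left hx0.le (by linarith) (by linarith)
  have h6 : -(x / (b - 1)) ≤ 2 * Real.log F := by
    rw [h2]
    calc -(x / (b-1)) ≤ -(x / (b - x)) := by linarith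
      _ = -(x / b / (1 - x / b)) := by rw [h4]
      _ ≤ Real.log (1 - x / b) := hlog1
      _ ≤ Real.log (F ^ 2) := h3
  have hxx : x / (2 * (b - 1)) = (x / (b - 1)) / 2 := by
    rw [div_div, mul_comm]
  rw [hxx]
  linarith

set_option maxHeartbeats 1000000 in
theorem tprod_abs_one_add_qpow_div_z_ge (n : ℕ) (hn : 2 ≤ n) (q : ℝ)
    (hq1 : 1 - 1 / ((n : ℝ) - 1) < q) (hq2 : q ≤ 1 - 1 / n)
    (b : ℝ) (hb : 1.5 ≤ b) (z : ℂ) (him : b ≤ |z.im|) :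
    ∏' m : ℕ, ‖1 + (q : ℂ) ^ m / z‖ ≥ Real.exp (-(n : ℝ) * (b + 1) / b ^ 2) := by
  have hn1 : (1 : ℝ) ≤ (n : ℝ) - 1 := by
    have : (2 : ℝ) ≤ (n : ℝ) := by exact_mod_cast hn
    linarith
  have hq0 : 0 < q := by
    have : 1 / ((n : ℝ) - 1) ≤ 1 := by
      rw [div_le_one (by linarith)]; linarith
    linarith
  have hnpos : (0 : ℝ) < n := by positivity
  have hq1' : q < 1 := by
    have : 0 < 1 / (n : ℝ) := by positivity
    linarith
  have hb0 : (0 : ℝ) < b := by linarith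
  have hz : z ≠ 0 := by
    intro h
    rw [h] at him
    simp at him
    linarith
  obtain ⟨f, hf⟩ : ∃ f : ℕ → ℝ, f = fun m => ‖1 + (q : ℂ) ^ m / z‖ := ⟨_, rfl⟩
  rw [show (∏' m : ℕ, ‖1 + (q : ℂ) ^ m / z‖) = ∏' m : ℕ, f m by rw [hf]]
  have hxpos : ∀ m : ℕ, 0 < q ^ m := fun m => pow_pos hq0 m
  have hxle : ∀ m : ℕ, q ^ m ≤ 1 := fun m => pow_le_one₀ hq0.le hq1'.le
  -- key lower bound on the square of each factor
  have hsq : ∀ m : ℕ, 1 - q ^ m / b ≤ f m ^ 2 := by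
    intro m
    set x := q ^ m with hx
    have hx0 : 0 ≤ x := (hxpos m).le
    have hx1 : x ≤ 1 := hxle m
    have hrw : 1 + (q : ℂ) ^ m / z = (z + (x : ℝ)) / z := by
      rw [hx]
      push_cast
      field_simp
    have hnsq : 0 < Complex.normSq z := Complex.normSq_pos.2 hz
    have hfm : f m ^ 2 = Complex.normSq (z + (x : ℝ)) / Complex.normSq z := by
      rw [hf]
      simp only [hrw, norm_div, div_pow, Complex.sq_norm]
    rw [hfm, le_div_iff₀ hnsq]
    have h1 : Complex.normSq (z + (x : ℝ)) = (z.re + x) ^ 2 + z.im ^ 2 := by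
      simp [Complex.normSq_apply]; ring
    have h2 : Complex.normSq z = z.re ^ 2 + z.im ^ 2 := by
      simp [Complex.normSq_apply]; ring
    rw [h1, h2]
    -- use |Im z| ≥ b
    have him2 : b * |z.im| ≤ z.im ^ 2 := by
      have h := mul_le_mul_of_nonneg_right him (abs_nonneg z.im)
      nlinarith [sq_abs z.im]
    have hre : z.re ^ 2 + z.im ^ 2 ≥ 2 * |z.re| * b := by
      nlinarith [sq_nonneg (|z.re| - |z.im|), sq_abs z.re, sq_abs z.im,
        mul_le_mul_of_nonneg_left him (abs_nonneg z.re)]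
    have habs : -|z.re| ≤ z.re := neg_abs_le z.re
    have hmul : b * ((1 - x / b) * (z.re ^ 2 + z.im ^ 2)) =
        b * (z.re ^ 2 + z.im ^ 2) - x * (z.re ^ 2 + z.im ^ 2) := by
      field_simp
    rw [← mul_le_mul_iff_of_pos_left hb0, hmul]
    nlinarith [mul_le_mul_of_nonneg_left hre hx0,
      mul_le_mul_of_nonneg_left habs (mul_nonneg (by linarith : (0:ℝ) ≤ 2 * b) hx0),
      mul_nonneg (mul_nonneg hb0.le hx0) hx0]
  have hone_sub_pos : ∀ m : ℕ, (0:ℝ) < 1 - q ^ m / b := by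
    intro m
    have : q ^ m / b ≤ 1 / 1.5 := by
      apply div_le_div₀ (by norm_num) (hxle m) (by norm_num) hb
    norm_num at this ⊢
    linarith
  have hfpos : ∀ m : ℕ, 0 < f m := by
    intro m
    have h0 : 0 ≤ f m := by rw [hf]; exact norm_nonneg _
    nlinarith [hone_sub_pos m, hsq m, h0]
  -- log lower bound : log (f m) ≥ - q^m / (2*(b-1))
  have hlog_low : ∀ m : ℕ, -(q ^ m / (2 * (b - 1))) ≤ Real.log (f m) := fun m =>
    log_lower_aux b (q ^ m) (f m) hb (hxpos m) (hxle m) (hfpos m) (hsq m)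
  -- log upper bound : log (f m) ≤ q^m
  have hlog_up : ∀ m : ℕ, Real.log (f m) ≤ q ^ m := by
    intro m
    have hfle : f m ≤ 1 + q ^ m := by
      rw [hf]
      calc ‖1 + (q : ℂ) ^ m / z‖ ≤ ‖(1 : ℂ)‖ + ‖(q : ℂ) ^ m / z‖ :=
            norm_add_le _ _
        _ = 1 + ‖(q : ℂ) ^ m‖ / ‖z‖ := by rw [norm_div, norm_one]
        _ ≤ 1 + q ^ m := by
            have habsz : 1 ≤ ‖z‖ := by
              have : |z.im| ≤ ‖z‖ := Complex.abs_im_le_norm z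
              linarith
            have h7 : ‖(q : ℂ) ^ m‖ = q ^ m := by
              rw [norm_pow, Complex.norm_real, Real.norm_eq_abs, abs_of_pos hq0]
            rw [h7]
            have : q ^ m / ‖z‖ ≤ q ^ m := by
              apply div_le_self (hxpos m).le habsz
            linarith
    calc Real.log (f m) ≤ f m - 1 := Real.log_le_sub_one_of_pos (hfpos m)
      _ ≤ q ^ m := by linarith
  -- summability
  have hgeom : Summable (fun m : ℕ => q ^ m) := summable_geometric_of_lt_one hq0.le hq1'
  have habs_le : ∀ m : ℕ, |Real.log (f m)| ≤ q ^ m := by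
    intro m
    rw [abs_le]
    constructor
    · have h1 := hlog_low m
      have : q ^ m / (2 * (b - 1)) ≤ q ^ m := by
        apply div_le_self (hxpos m).le
        linarith
      linarith
    · exact hlog_up m
  have hsum : Summable (fun m : ℕ => Real.log (f m)) := by
    apply Summable.of_abs
    exact Summable.of_nonneg_of_le (fun m => abs_nonneg _) habs_le hgeom
  -- infinite product equals exp of sum of logs
  have hprod : HasProd f (Real.exp (∑' m, Real.log (f m))) := by
    apply (hsum.hasSum.rexp).congr
    intro s
    exact Finset.prod_congr rfl fun i _ => Real.exp_log (hfpos i)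
  rw [hprod.tprod_eq, ge_iff_le, Real.exp_le_exp]
  -- now bound the sum of logs
  obtain ⟨c, hc⟩ : ∃ c : ℝ, c = (b + 1) / b ^ 2 := ⟨_, rfl⟩
  have hc2 : ∀ m : ℕ, -(c * q ^ m) ≤ Real.log (f m) := by
    intro m
    have h1 := hlog_low m
    have h2b : (0:ℝ) < 2 * (b - 1) := by linarith
    have hbsq : (0:ℝ) < b ^ 2 := by positivity
    have hstep : q ^ m / (2 * (b - 1)) ≤ c * q ^ m := by
      rw [div_le_iff₀ h2b, hc]
      have heq : (b + 1) / b ^ 2 * q ^ m * (2 * (b - 1)) =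
          (b + 1) * (2 * (b - 1)) * q ^ m / b ^ 2 := by ring
      rw [heq, le_div_iff₀ hbsq]
      have hbb : b ^ 2 ≤ (b + 1) * (2 * (b - 1)) := by nlinarith
      nlinarith [mul_le_mul_of_nonneg_right hbb (hxpos m).le]
    linarith
  have hsum2 : Summable (fun m : ℕ => -(c * q ^ m)) := ((hgeom.mul_left c).neg)
  have htsum : ∑' m : ℕ, -(c * q ^ m) ≤ ∑' m, Real.log (f m) :=
    Summable.tsum_le_tsum hc2 hsum2 hsum
  have heval : ∑' m : ℕ, -(c * q ^ m) = -(c * (1 - q)⁻¹) := by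
    rw [tsum_neg, tsum_mul_left, tsum_geometric_of_lt_one hq0.le hq1']
  have hinv : (1 - q)⁻¹ ≤ (n : ℝ) := by
    rw [inv_le_comm₀ (by linarith) hnpos]
    have : (1 : ℝ) / n ≤ 1 - q := by linarith
    rwa [one_div] at this
  have hc0 : 0 < c := by rw [hc]; positivity
  have hfin : -(n : ℝ) * (b + 1) / b ^ 2 ≤ -(c * (1 - q)⁻¹) := by
    have h1 : c * (1 - q)⁻¹ ≤ c * n := by
      apply mul_le_mul_of_nonneg_left hinv hc0.le
    have h2 : c * n = (n : ℝ) * (b + 1) / b ^ 2 := by rw [hc]; ring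
    have h3 : -(n : ℝ) * (b + 1) / b ^ 2 = -((n : ℝ) * (b + 1) / b ^ 2) := by ring
    linarith
  linarith
end

section
/- For every real q ∈ (0,1), the infinite product Π_{m=1}^∞ (1 - 0.683·q^{m-1}) satisfies Π_{m=1}^∞ (1 - 0.683·q^{m-1}) ≥ e^{-1.149489/(1-q)}, where 1.149489 = 0.683 + 0.683². Consequently, for every integer n ≥ 2 and every q with 0 < q ≤ 1 - 1/n, one has Π_{m=1}^∞ (1 - 0.683·q^{m-1}) ≥ e^{-1.149489·n}. -/
open Real Finset

/-- Numeric fact: `exp (-1.149489) ≤ 0.317`. -/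
lemma exp_neg_const_le : Real.exp (-1.149489) ≤ 0.317 := by
  have hsum : ∑ i ∈ Finset.range 9, (1.149489 : ℝ) ^ i / i.factorial ≤ Real.exp 1.149489 :=
    Real.sum_le_exp_of_nonneg (by norm_num) 9
  have hval : (1 / 0.317 : ℝ) ≤ ∑ i ∈ Finset.range 9, (1.149489 : ℝ) ^ i / i.factorial := by
    simp only [Finset.sum_range_succ, Finset.sum_range_zero]
    norm_num [Nat.factorial]
  have h : (1 / 0.317 : ℝ) ≤ Real.exp 1.149489 := hval.trans hsum
  rw [Real.exp_neg]
  rw [inv_le_comm₀ (Real.exp_pos _) (by norm_num)]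
  linarith

/-- Pointwise key inequality: for `t ∈ [0,1]`, `exp (-1.149489 t) ≤ 1 - 0.683 t`. -/
lemma exp_key {t : ℝ} (ht0 : 0 ≤ t) (ht1 : t ≤ 1) :
    Real.exp (-1.149489 * t) ≤ 1 - 0.683 * t := by
  have h1 : Real.exp (-1.149489 * t) = Real.exp (-1.149489) ^ t := by
    rw [← Real.exp_mul]
  have h2 : Real.exp (-1.149489) ^ t ≤ (0.317 : ℝ) ^ t :=
    Real.rpow_le_rpow (Real.exp_pos _).le exp_neg_const_le ht0
  have h3 : ((1 : ℝ) + (-0.683)) ^ t ≤ 1 + t * (-0.683) :=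
    rpow_one_add_le_one_add_mul_self (by norm_num) ht0 ht1
  have h4 : ((1 : ℝ) + (-0.683)) = (0.317 : ℝ) := by norm_num
  rw [h1]
  calc Real.exp (-1.149489) ^ t ≤ (0.317 : ℝ) ^ t := h2
    _ ≤ 1 + t * (-0.683) := by rw [← h4]; exact h3
    _ = 1 - 0.683 * t := by ring

theorem tprod_one_sub_const_mul_pow_ge (q : ℝ) (hq0 : 0 < q) (hq1 : q < 1) :
    ∏' m : ℕ, (1 - 0.683 * q ^ m) ≥ Real.exp (-1.149489 / (1 - q)) ∧
    ∀ n : ℕ, 2 ≤ n → q ≤ 1 - 1 / n →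
      ∏' m : ℕ, (1 - 0.683 * q ^ m) ≥ Real.exp (-1.149489 * n) := by
  have hqm0 : ∀ m : ℕ, 0 ≤ q ^ m := fun m => pow_nonneg hq0.le m
  have hqm1 : ∀ m : ℕ, q ^ m ≤ 1 := fun m => pow_le_one₀ hq0.le hq1.le
  have hpos : ∀ m : ℕ, 0 < 1 - 0.683 * q ^ m := fun m =>
    lt_of_lt_of_le (Real.exp_pos _) (exp_key (hqm0 m) (hqm1 m))
  -- log lower bound
  have hlog : ∀ m : ℕ, -1.149489 * q ^ m ≤ Real.log (1 - 0.683 * q ^ m) := by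
    intro m
    have := Real.log_le_log (Real.exp_pos _) (exp_key (hqm0 m) (hqm1 m))
    rwa [Real.log_exp] at this
  have hlog0 : ∀ m : ℕ, Real.log (1 - 0.683 * q ^ m) ≤ 0 := by
    intro m
    apply Real.log_nonpos (hpos m).le
    nlinarith [hqm0 m]
  -- summability of the logs
  have hgeom : Summable (fun m : ℕ => q ^ m) := summable_geometric_of_lt_one hq0.le hq1
  have hsumlog : Summable (fun m : ℕ => Real.log (1 - 0.683 * q ^ m)) := by
    rw [← summable_neg_iff]
    apply Summable.of_nonneg_of_le (fun m => by linarith [hlog0 m])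
      (fun m => by linarith [hlog m]) (hgeom.mul_left 1.149489)
  -- tprod = exp(tsum log)
  have htprod : ∏' m : ℕ, (1 - 0.683 * q ^ m)
      = Real.exp (∑' m : ℕ, Real.log (1 - 0.683 * q ^ m)) := by
    have := Real.rexp_tsum_eq_tprod (f := fun m : ℕ => 1 - 0.683 * q ^ m) hpos hsumlog
    exact this.symm
  -- sum of the lower bounds
  have htsum_geom : ∑' m : ℕ, (-1.149489 * q ^ m) = -1.149489 / (1 - q) := by
    rw [tsum_mul_left, tsum_geometric_of_lt_one hq0.le hq1, div_eq_mul_inv]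
  have hmain : Real.exp (-1.149489 / (1 - q)) ≤ ∏' m : ℕ, (1 - 0.683 * q ^ m) := by
    rw [htprod, Real.exp_le_exp, ← htsum_geom]
    exact Summable.tsum_le_tsum hlog (hgeom.mul_left _) hsumlog
  refine ⟨hmain, fun n hn hqn => ?_⟩
  have hn0 : (0 : ℝ) < n := by positivity
  have h1q : 1 / (n : ℝ) ≤ 1 - q := by linarith
  have h1qpos : (0 : ℝ) < 1 - q := by linarith
  have hinv : 1 / (1 - q) ≤ (n : ℝ) := by
    rw [div_le_iff₀ h1qpos]
    rw [div_le_iff₀ hn0] at h1q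
    linarith
  have : Real.exp (-1.149489 * n) ≤ Real.exp (-1.149489 / (1 - q)) := by
    rw [Real.exp_le_exp]
    have : (1.149489 : ℝ) / (1 - q) ≤ 1.149489 * n := by
      rw [div_eq_mul_inv, ← one_div]
      nlinarith
    rw [neg_div]
    linarith
  exact le_trans this hmain
end

section
/- Let q ∈ (0.30925, 1) and let z = -a + b·i with a > 0 real and b real satisfying b ≥ max(a, 132). Then |Θ*(q,z)| > |G(q,z)|; consequently θ(q,z) ≠ 0. -/
open Complex Real

/-- The partial theta function `θ(q,z) = ∑_{j=0}^∞ q^{j(j+1)/2} z^j`. -/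
noncomputable def partialTheta (q : ℝ) (z : ℂ) : ℂ :=
  ∑' j : ℕ, (q : ℂ) ^ (j * (j + 1) / 2) * z ^ j

/-- `G(q,z) = ∑_{j=1}^∞ q^{j(j-1)/2} z^{-j}`, the negative-index part of `Θ*`. -/
noncomputable def Gfun (q : ℝ) (z : ℂ) : ℂ :=
  ∑' j : ℕ, (q : ℂ) ^ (j * (j + 1) / 2) * z ^ (-((j : ℤ) + 1))

/-- `Θ*(q,z) = ∑_{j=-∞}^∞ q^{j(j+1)/2} z^j`. -/
noncomputable def ThetaStar (q : ℝ) (z : ℂ) : ℂ :=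
  ∑' j : ℤ, (q : ℂ) ^ ((j * (j + 1)) / 2).toNat * z ^ j

namespace ThetaAux

/-- The `τ` parameter for which `Θ*(q,·)` matches `jacobiTheta₂`. -/
noncomputable def tau (q : ℝ) : ℂ := ((-Real.log q) / (2 * π) : ℝ) * I

/-- Auxiliary complex logarithm combination. -/
noncomputable def zc (q : ℝ) (z : ℂ) : ℂ := ((Real.log q) / 2 : ℝ) + Complex.log z

/-- The `z`-parameter for which `Θ*(q,·)` matches `jacobiTheta₂`. -/
noncomputable def z0 (q : ℝ) (z : ℂ) : ℂ := zc q z / (2 * π * I)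

lemma tau_im (q : ℝ) : (tau q).im = (-Real.log q) / (2 * π) := by
  rw [tau, Complex.mul_I_im, Complex.ofReal_re]

lemma tau_im_pos {q : ℝ} (hq0 : 0 < q) (hq2 : q < 1) : 0 < (tau q).im := by
  rw [tau_im]
  have : Real.log q < 0 := Real.log_neg hq0 hq2
  have hπ : (0:ℝ) < π := Real.pi_pos
  apply div_pos (by linarith) (by linarith)

lemma term_eq {q : ℝ} (hq0 : 0 < q) {z : ℂ} (hz0 : z ≠ 0) (n : ℤ) :
    jacobiTheta₂_term n (z0 q z) (tau q) = (q : ℂ) ^ ((n * (n + 1)) / 2).toNat * z ^ n := by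
  have hπ : (π : ℂ) ≠ 0 := Complex.ofReal_ne_zero.2 Real.pi_ne_zero
  have hq0' : (q : ℂ) ≠ 0 := Complex.ofReal_ne_zero.2 hq0.ne'
  have h2 : (2 : ℤ) ∣ n * (n + 1) := (Int.even_mul_succ_self n).two_dvd
  set m : ℤ := n * (n + 1) / 2 with hm
  have hm2 : (2 : ℤ) * m = n * (n + 1) := Int.two_mul_ediv_two_of_even (Int.even_mul_succ_self n)
  have hmn : (0 : ℤ) ≤ n * (n + 1) := by
    rcases le_or_gt 0 n with h | h
    · exact mul_nonneg h (by omega)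
    · have h0 : (0:ℤ) ≤ (-n) * (-(n+1)) := mul_nonneg (by omega) (by omega)
      nlinarith
  have hm0 : 0 ≤ m := Int.ediv_nonneg hmn (by norm_num)
  have hm2' : (m : ℂ) * 2 = (n : ℂ) ^ 2 + n := by
    have : ((2 * m : ℤ) : ℂ) = ((n * (n + 1) : ℤ) : ℂ) := by rw [hm2]
    push_cast at this
    linear_combination this
  have hI : I ≠ 0 := I_ne_zero
  have e1 : 2 * (π : ℂ) * I * n * (z0 q z) = (n : ℂ) * zc q z := by
    rw [z0]; field_simp
  have e2 : (π : ℂ) * I * n ^ 2 * (tau q) = (n : ℂ) ^ 2 * (Real.log q : ℂ) / 2 := by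
    rw [tau]; push_cast; field_simp; linear_combination -(n:ℂ)^2 * (Real.log q : ℂ) * I_sq
  have key : 2 * (π : ℂ) * I * n * (z0 q z) + (π : ℂ) * I * n ^ 2 * (tau q)
      = (m : ℂ) * (Real.log q : ℂ) + (n : ℂ) * Complex.log z := by
    rw [e1, e2, zc]
    push_cast
    linear_combination -(Real.log q : ℂ) / 2 * hm2'
  rw [jacobiTheta₂_term, key, Complex.exp_add]
  congr 1
  · rw [← zpow_natCast (q:ℂ) (m.toNat), Int.toNat_of_nonneg hm0, Complex.ofReal_log hq0.le,
      Complex.exp_int_mul, Complex.exp_log hq0']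
  · rw [Complex.exp_int_mul, Complex.exp_log hz0]

lemma thetaStar_eq {q : ℝ} (hq0 : 0 < q) {z : ℂ} (hz0 : z ≠ 0) :
    ThetaStar q z = jacobiTheta₂ (z0 q z) (tau q) := by
  rw [ThetaStar, jacobiTheta₂]
  exact tsum_congr fun n => (term_eq hq0 hz0 n).symm

lemma summable_theta {q : ℝ} (hq0 : 0 < q) (hq2 : q < 1) {z : ℂ} (hz0 : z ≠ 0) :
    Summable (fun n : ℤ => (q : ℂ) ^ ((n * (n + 1)) / 2).toNat * z ^ n) := by
  refine ((summable_jacobiTheta₂_term_iff (z0 q z) (tau q)).2 (tau_im_pos hq0 hq2)).congr ?_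
  exact fun n => term_eq hq0 hz0 n

lemma split_eq {q : ℝ} (hq0 : 0 < q) (hq2 : q < 1) {z : ℂ} (hz0 : z ≠ 0) :
    ThetaStar q z = partialTheta q z + Gfun q z := by
  have hs := summable_theta hq0 hq2 hz0
  have h1 : Summable (fun n : ℕ => (q : ℂ) ^ (((n : ℤ) * ((n : ℤ) + 1)) / 2).toNat * z ^ (n : ℤ)) :=
    hs.comp_injective (i := ((↑·) : ℕ → ℤ)) (fun a b h => by
      simp only [] at h; exact_mod_cast h)
  have h2 : Summable (fun n : ℕ =>
      (q : ℂ) ^ (((-((n : ℤ) + 1)) * ((-((n : ℤ) + 1)) + 1)) / 2).toNat * z ^ (-((n : ℤ) + 1))) :=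
    hs.comp_injective (i := (fun n : ℕ => -((n : ℤ) + 1))) (fun a b h => by
      simp only [] at h; omega)
  rw [ThetaStar, tsum_of_nat_of_neg_add_one
    (f := fun j : ℤ => (q : ℂ) ^ ((j * (j + 1)) / 2).toNat * z ^ j) h1 h2]
  rw [partialTheta, Gfun]
  refine congrArg₂ (· + ·) ?_ ?_
  · refine tsum_congr fun n => ?_
    have h : ((n : ℤ)) * ((n : ℤ) + 1) = ((n * (n + 1) : ℕ) : ℤ) := by push_cast; ring
    have he : (((n : ℤ) * ((n : ℤ) + 1)) / 2).toNat = n * (n + 1) / 2 := by rw [h]; omega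
    rw [he, zpow_natCast]
  · refine tsum_congr fun n => ?_
    have h : ((-((n : ℤ) + 1)) * ((-((n : ℤ) + 1)) + 1)) = ((n * (n + 1) : ℕ) : ℤ) := by
      push_cast; ring
    have he : (((-((n : ℤ) + 1)) * ((-((n : ℤ) + 1)) + 1)) / 2).toNat = n * (n + 1) / 2 := by
      rw [h]; omega
    rw [he]

lemma Gfun_bound {q : ℝ} (hq0 : 0 < q) (hq2 : q < 1) {z : ℂ} (habs : 132 ≤ ‖z‖) :
    ‖Gfun q z‖ ≤ 1 / 131 := by
  have hz0 : (0:ℝ) < ‖z‖ := by linarith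
  rw [Gfun]
  have hgeo : HasSum (fun j : ℕ => (1 / 132 : ℝ) * (1 / 132) ^ j) ((1/132) * (1 - 1/132)⁻¹) :=
    (hasSum_geometric_of_lt_one (by norm_num) (by norm_num)).mul_left _
  refine le_trans (tsum_of_norm_bounded hgeo fun j => ?_) (by norm_num)
  rw [norm_mul, norm_pow, norm_zpow]
  have h1 : ‖(q : ℂ)‖ ≤ 1 := by
    rw [Complex.norm_real, Real.norm_eq_abs, abs_of_pos hq0]; linarith
  have h2 : ‖z‖ ^ (-((j : ℤ) + 1)) ≤ (1/132 : ℝ) * (1/132) ^ j := by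
    rw [zpow_neg, show ((j : ℤ) + 1) = ((j + 1 : ℕ) : ℤ) by push_cast; ring, zpow_natCast]
    rw [show (1/132 : ℝ) * (1/132) ^ j = ((132:ℝ) ^ (j+1))⁻¹ by
      rw [pow_succ]; field_simp; rw [← mul_pow]; norm_num]
    apply inv_anti₀ (by positivity)
    exact pow_le_pow_left₀ (by norm_num) habs _
  calc ‖(q:ℂ)‖ ^ (j * (j + 1) / 2) * ‖z‖ ^ (-((j : ℤ) + 1))
      ≤ 1 * ((1/132 : ℝ) * (1/132) ^ j) := by
        apply mul_le_mul _ h2 (by positivity) (by norm_num)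
        exact pow_le_one₀ (norm_nonneg _) h1
    _ = (1/132 : ℝ) * (1/132) ^ j := one_mul _

lemma arg_le {z : ℂ} (hz0 : z ≠ 0) (hre : z.re < 0) (him : 0 < z.im) (hba : -z.re ≤ z.im) :
    z.arg ≤ 3 * π / 4 := by
  by_contra h
  push_neg at h
  have hpi : (0:ℝ) < π := Real.pi_pos
  have hmem1 : 3 * π / 4 ∈ Set.Icc 0 π := ⟨by linarith, by linarith⟩
  have hmem2 : z.arg ∈ Set.Icc 0 π :=
    ⟨Complex.arg_nonneg_iff.2 him.le, Complex.arg_le_pi z⟩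
  have hcos := Real.strictAntiOn_cos hmem1 hmem2 h
  have h34 : Real.cos (3 * π / 4) = -(Real.sqrt 2 / 2) := by
    rw [show (3 * π / 4 : ℝ) = π - π / 4 by ring, Real.cos_pi_sub, Real.cos_pi_div_four]
  rw [h34, Complex.cos_arg hz0] at hcos
  have habs : (0:ℝ) < ‖z‖ := norm_pos_iff.mpr hz0
  have hsq : ‖z‖ ^ 2 = z.re ^ 2 + z.im ^ 2 := by
    rw [Complex.sq_norm, Complex.normSq_apply]; ring
  have hs2 : Real.sqrt 2 ^ 2 = 2 := Real.sq_sqrt (by norm_num)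
  have hs2' : (0:ℝ) ≤ Real.sqrt 2 := Real.sqrt_nonneg 2
  -- z.re / abs z < -(√2/2) ⇒ -z.re > (√2/2) * abs z
  have h1 : (Real.sqrt 2 / 2) * ‖z‖ < -z.re := by
    rw [div_lt_iff₀ habs] at hcos
    nlinarith
  have h2 : (Real.sqrt 2 / 2 * ‖z‖) * (Real.sqrt 2 / 2 * ‖z‖)
      < (-z.re) * (-z.re) := mul_self_lt_mul_self (by positivity) h1
  have h3 : z.re ^ 2 ≤ z.im ^ 2 := by
    nlinarith [mul_self_le_mul_self (by linarith : (0:ℝ) ≤ -z.re) hba]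
  have h5 : Real.sqrt 2 ^ 2 * ‖z‖ ^ 2 = 2 * ‖z‖ ^ 2 := by rw [hs2]
  nlinarith [h2, h3, hsq, h5]

lemma twenty_le_exp3 : (20:ℝ) ≤ rexp 3 := by
  calc (20:ℝ) ≤ 2.7182818283 ^ 3 := by norm_num
  _ ≤ (rexp 1) ^ 3 := pow_le_pow_left₀ (by norm_num) Real.exp_one_gt_d9.le 3
  _ = rexp 3 := by rw [← Real.exp_nat_mul]; norm_num

lemma exp4_le_132 : rexp 4 ≤ 132 := by
  calc rexp 4 = (rexp 1) ^ 4 := by rw [← Real.exp_nat_mul]; norm_num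
  _ ≤ 2.7182818286 ^ 4 := pow_le_pow_left₀ (Real.exp_pos 1).le Real.exp_one_lt_d9.le 4
  _ ≤ 132 := by norm_num

lemma exp125 : (3.23364 : ℝ) ≤ rexp 1.25 := by
  have h2 : (1.25 : ℝ) ≤ rexp 0.25 := by
    have := Real.add_one_le_exp (0.25:ℝ); linarith
  calc (3.23364:ℝ) ≤ 2.7182818283 * 1.25 := by norm_num
  _ ≤ rexp 1 * rexp 0.25 := by nlinarith [Real.exp_one_gt_d9, Real.exp_pos (0.25:ℝ)]
  _ = rexp 1.25 := by rw [← Real.exp_add]; norm_num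

lemma lam_le {q : ℝ} (hq1 : 0.30925 < q) (hq2 : q < 1) : -Real.log q ≤ 1.25 := by
  have hq0 : (0:ℝ) < q := lt_trans (by norm_num) hq1
  have hkey : rexp (-1.25) ≤ 0.30925 := by
    rw [Real.exp_neg]
    have h1 : (0:ℝ) < rexp 1.25 := Real.exp_pos _
    rw [inv_le_comm₀ h1 (by norm_num)]
    calc (0.30925:ℝ)⁻¹ ≤ 3.23364 := by norm_num
    _ ≤ rexp 1.25 := exp125
  have := (Real.le_log_iff_exp_le hq0).2 (le_trans hkey hq1.le)
  linarith

set_option maxHeartbeats 2000000 in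
lemma theta_lower {q : ℝ} (hq1 : 0.30925 < q) (hq2 : q < 1) {z : ℂ} (hz0 : z ≠ 0)
    (habs : 132 ≤ ‖z‖) (harg : z.arg ≤ 3 * π / 4) (hargn : 0 ≤ z.arg) :
    17 / 19 ≤ ‖ThetaStar q z‖ := by
  have hq0 : (0:ℝ) < q := lt_trans (by norm_num) hq1
  have hπ : (0:ℝ) < π := Real.pi_pos
  have hπ' : (π:ℂ) ≠ 0 := Complex.ofReal_ne_zero.2 Real.pi_ne_zero
  have hlq : Real.log q < 0 := Real.log_neg hq0 hq2
  set l : ℝ := -Real.log q with hldef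
  have hl0 : 0 < l := by simp [hldef]; linarith
  have hl125 : l ≤ 1.25 := lam_le hq1 hq2
  have htau_ne : tau q ≠ 0 := by
    intro h
    have := tau_im_pos hq0 hq2
    rw [h] at this
    simp at this
  -- transformed parameters
  have hform : -1 / tau q = ((2 * π / l : ℝ) : ℂ) * I := by
    rw [div_eq_iff htau_ne, tau, hldef]
    push_cast
    have hlq' : ((Real.log q : ℂ)) ≠ 0 := Complex.ofReal_ne_zero.2 hlq.ne
    field_simp
    linear_combination (-1:ℂ) * I_sq
  have hτ'im : (-1 / tau q).im = 2 * π / l := by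
    rw [hform, Complex.mul_I_im, Complex.ofReal_re]
  have hτ'im_pos : 0 < (-1 / tau q).im := by rw [hτ'im]; positivity
  have hwform : z0 q z / tau q = ((-1 / l : ℝ) : ℂ) * zc q z := by
    rw [div_eq_iff htau_ne, z0, tau, hldef]
    push_cast
    have hlq' : ((Real.log q : ℂ)) ≠ 0 := Complex.ofReal_ne_zero.2 hlq.ne
    field_simp
    linear_combination (zc q z) * I_sq
  have hwim : (z0 q z / tau q).im = -(z.arg) / l := by
    rw [hwform, Complex.mul_im]
    simp [zc, Complex.log_im]
    ring
  -- geometric ratio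
  set r : ℝ := rexp (-(π ^ 2) / (2 * l)) with hrdef
  have hr0 : 0 ≤ r := (Real.exp_pos _).le
  have hr1 : r < 1 := by
    rw [hrdef, Real.exp_lt_one_iff]
    have : (0:ℝ) < π ^ 2 := by positivity
    have h2l : (0:ℝ) < 2 * l := by linarith
    exact div_neg_of_neg_of_pos (by linarith) h2l
  have hr20 : r ≤ 1 / 20 := by
    have h3 : (3:ℝ) ≤ π ^ 2 / (2 * l) := by
      rw [le_div_iff₀ (by positivity)]
      nlinarith [Real.pi_gt_d6]
    have : r ≤ rexp (-3) := by
      rw [hrdef, Real.exp_le_exp]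
      have : -(π ^ 2) / (2 * l) = -(π ^ 2 / (2 * l)) := by ring
      rw [this]
      linarith
    refine le_trans this ?_
    rw [Real.exp_neg]
    rw [inv_le_comm₀ (Real.exp_pos 3) (by norm_num)]
    calc ((1:ℝ)/20)⁻¹ = 20 := by norm_num
    _ ≤ rexp 3 := twenty_le_exp3
  -- term bounds
  have hterm : ∀ n : ℤ, ‖jacobiTheta₂_term n (z0 q z / tau q) (-1 / tau q)‖ ≤ r ^ n.natAbs ∨ n = 0 := by
    intro n
    rcases eq_or_ne n 0 with h | h
    · right; exact h
    left
    rw [norm_jacobiTheta₂_term, hτ'im, hwim, hrdef, ← Real.exp_nat_mul, Real.exp_le_exp]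
    have hNA : ((n.natAbs : ℝ)) = |(n:ℝ)| := by
      rw [Nat.cast_natAbs]
      exact_mod_cast rfl
    have e1 : -π * (n:ℝ) ^ 2 * (2 * π / l) - 2 * π * (n:ℝ) * (-(z.arg) / l)
        = (-π * (n:ℝ) ^ 2 * (2 * π) + 2 * π * n * z.arg) / l := by ring
    have e2 : ((n.natAbs:ℝ)) * (-(π ^ 2) / (2 * l)) = ((n.natAbs:ℝ) * (-(π ^ 2) / 2)) / l := by
      ring
    rw [e1, e2, div_le_div_iff_of_pos_right hl0]
    rcases lt_or_gt_of_ne h with hn | hn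
    · have hn1 : (n:ℝ) ≤ -1 := by
        have hh : n ≤ -1 := by omega
        exact_mod_cast hh
      have habs' : |(n:ℝ)| = -(n:ℝ) := abs_of_neg (by linarith)
      rw [hNA, habs']
      nlinarith [mul_nonneg (mul_nonneg hπ.le hargn) (by linarith : (0:ℝ) ≤ -(n:ℝ)),
        mul_pos hπ hπ, sq_nonneg ((n:ℝ) + 1)]
    · have hn1 : (1:ℝ) ≤ (n:ℝ) := by exact_mod_cast hn
      have habs' : |(n:ℝ)| = (n:ℝ) := abs_of_pos (by linarith)
      rw [hNA, habs']
      nlinarith [mul_le_mul_of_nonneg_left harg (by positivity : (0:ℝ) ≤ 2 * π * (n:ℝ)),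
        mul_pos hπ hπ, sq_nonneg ((n:ℝ) - 1), mul_nonneg (mul_nonneg hπ.le hπ.le)
          (sq_nonneg ((n:ℝ) - 1))]
  have hterm' : ∀ n : ℤ, n ≠ 0 →
      ‖jacobiTheta₂_term n (z0 q z / tau q) (-1 / tau q)‖ ≤ r ^ n.natAbs := by
    intro n hn
    rcases hterm n with h | h
    · exact h
    · exact absurd h hn
  -- decomposition of the transformed theta sum
  set t : ℤ → ℂ := fun n => jacobiTheta₂_term n (z0 q z / tau q) (-1 / tau q) with htdef
  have hsum' : Summable t := (summable_jacobiTheta₂_term_iff _ _).2 hτ'im_pos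
  have hsnat : Summable (fun n : ℕ => t ↑n) :=
    hsum'.comp_injective (i := ((↑·) : ℕ → ℤ)) (fun a b h => by simp only [] at h; exact_mod_cast h)
  have hsneg : Summable (fun n : ℕ => t (-(↑n + 1))) :=
    hsum'.comp_injective (i := (fun n : ℕ => -((n:ℤ) + 1))) (fun a b h => by
      simp only [] at h; omega)
  have hS : jacobiTheta₂ (z0 q z / tau q) (-1 / tau q)
      = (∑' n : ℕ, t ↑n) + ∑' n : ℕ, t (-(↑n + 1)) := by
    rw [jacobiTheta₂]
    exact tsum_of_nat_of_neg_add_one (f := t) hsnat hsneg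
  have ht0 : t 0 = 1 := by simp [htdef, jacobiTheta₂_term]
  have hnat_split : (∑' n : ℕ, t ↑n) = 1 + ∑' n : ℕ, t ↑(n + 1) := by
    rw [Summable.tsum_eq_zero_add hsnat, show ((0:ℕ):ℤ) = 0 by norm_num, ht0]
  have hgeom : HasSum (fun n : ℕ => r * r ^ n) (r * (1 - r)⁻¹) :=
    (hasSum_geometric_of_lt_one hr0 hr1).mul_left r
  have hR1 : ‖∑' n : ℕ, t ↑(n + 1)‖ ≤ r * (1 - r)⁻¹ := by
    refine tsum_of_norm_bounded hgeom fun n => ?_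
    have h := hterm' (↑(n+1)) (by exact_mod_cast Nat.succ_ne_zero n)
    rw [Int.natAbs_natCast] at h
    calc ‖t ↑(n+1)‖ ≤ r ^ (n + 1) := h
    _ = r * r ^ n := by rw [pow_succ]; ring
  have hR2 : ‖∑' n : ℕ, t (-(↑n + 1))‖ ≤ r * (1 - r)⁻¹ := by
    refine tsum_of_norm_bounded hgeom fun n => ?_
    have hne : (-((n:ℤ) + 1)) ≠ 0 := by omega
    have h := hterm' _ hne
    have hna : (-((n:ℤ) + 1)).natAbs = n + 1 := by omega
    rw [hna] at h
    calc ‖t (-(↑n + 1))‖ ≤ r ^ (n + 1) := h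
    _ = r * r ^ n := by rw [pow_succ]; ring
  have hgeo_le : r * (1 - r)⁻¹ ≤ 1 / 19 := by
    have h1r : 0 < 1 - r := by linarith
    rw [mul_inv_le_iff₀ h1r]
    linarith
  have habsS : 17 / 19 ≤ ‖jacobiTheta₂ (z0 q z / tau q) (-1 / tau q)‖ := by
    set S := jacobiTheta₂ (z0 q z / tau q) (-1 / tau q) with hSdef
    set R1 := ∑' n : ℕ, t ↑(n + 1) with hR1def
    set R2 := ∑' n : ℕ, t (-(↑n + 1)) with hR2def
    have hone : (1:ℂ) = S - R1 - R2 := by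
      rw [hS, hnat_split]; ring
    have hb : (1:ℝ) ≤ ‖S‖ + ‖R1‖ + ‖R2‖ := by
      calc (1:ℝ) = ‖(1:ℂ)‖ := by simp
      _ = ‖S - R1 - R2‖ := by rw [← hone]
      _ ≤ ‖S - R1‖ + ‖R2‖ := norm_sub_le _ _
      _ ≤ ‖S‖ + ‖R1‖ + ‖R2‖ := by linarith [norm_sub_le S R1]
    linarith
  -- prefactors
  have hfe := jacobiTheta₂_functional_equation (z0 q z) (tau q)
  have habs_eq : ‖jacobiTheta₂ (z0 q z) (tau q)‖
      = ‖1 / (-I * tau q) ^ (1 / 2 : ℂ)‖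
        * ‖cexp (-↑π * I * (z0 q z) ^ 2 / tau q)‖
        * ‖jacobiTheta₂ (z0 q z / tau q) (-1 / tau q)‖ := by
    rw [hfe, norm_mul, norm_mul]
  have hx0 : (0:ℝ) < l / (2 * π) := by positivity
  have hP1 : 1 ≤ ‖1 / (-I * tau q) ^ (1 / 2 : ℂ)‖ := by
    have hx : -I * tau q = ((l / (2 * π) : ℝ) : ℂ) := by
      rw [tau, hldef]
      push_cast
      linear_combination ((Real.log q : ℂ) / (2 * π)) * I_sq
    rw [hx, norm_div, norm_one, Complex.norm_cpow_eq_rpow_re_of_pos hx0]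
    have hre : ((1 / 2 : ℂ)).re = 1 / 2 := by norm_num
    rw [hre]
    have hle1 : l / (2 * π) ≤ 1 := by
      rw [div_le_one (by positivity)]
      nlinarith [Real.pi_gt_d6]
    have hpow : (l / (2 * π)) ^ (1/2 : ℝ) ≤ 1 :=
      Real.rpow_le_one hx0.le hle1 (by norm_num)
    have hpowpos : (0:ℝ) < (l / (2 * π)) ^ (1/2 : ℝ) := Real.rpow_pos_of_pos hx0 _
    rw [le_div_iff₀ hpowpos]
    linarith
  have hP2 : 1 ≤ ‖cexp (-↑π * I * (z0 q z) ^ 2 / tau q)‖ := by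
    have h2l : ((2 * l : ℝ) : ℂ) ≠ 0 := Complex.ofReal_ne_zero.2 (by positivity)
    have harg_eq : -(π:ℂ) * I * (z0 q z) ^ 2 / tau q = (zc q z) ^ 2 / ((2 * l : ℝ) : ℂ) := by
      rw [div_eq_div_iff htau_ne h2l, z0, tau, hldef]
      push_cast
      field_simp
      linear_combination (zc q z) ^ 2 * (Real.log q : ℂ) * I_sq
    rw [harg_eq, Complex.norm_exp]
    have hre2 : ((zc q z) ^ 2 / ((2 * l : ℝ) : ℂ)).re
        = ((zc q z).re ^ 2 - (zc q z).im ^ 2) / (2 * l) := by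
      rw [Complex.div_ofReal_re]
      congr 1
      rw [sq]
      simp [Complex.mul_re]
      ring
    rw [hre2]
    apply Real.one_le_exp
    apply div_nonneg _ (by positivity)
    have hrezc : (zc q z).re = Real.log q / 2 + Real.log (‖z‖) := by
      simp [zc, Complex.log_re]
    have himzc : (zc q z).im = z.arg := by simp [zc, Complex.log_im]
    have hlogz : (4:ℝ) ≤ Real.log (‖z‖) :=
      (Real.le_log_iff_exp_le (by linarith)).2 (le_trans exp4_le_132 habs)
    have hargpi : |z.arg| ≤ π := Complex.abs_arg_le_pi z
    have hpilt : π < 3.15 := Real.pi_lt_d2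
    rw [hrezc, himzc]
    have h1 : π ≤ Real.log q / 2 + Real.log (‖z‖) := by
      have h2 := hl125
      rw [hldef] at h2
      linarith
    nlinarith [mul_self_le_mul_self (abs_nonneg z.arg) (le_trans hargpi h1),
      _root_.sq_abs z.arg, hπ]
  rw [thetaStar_eq hq0 hz0, habs_eq]
  have hnn : 0 ≤ ‖jacobiTheta₂ (z0 q z / tau q) (-1 / tau q)‖ :=
    norm_nonneg _
  have h1 : 17 / 19 ≤ ‖cexp (-↑π * I * z0 q z ^ 2 / tau q)‖ *
      ‖jacobiTheta₂ (z0 q z / tau q) (-1 / tau q)‖ := by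
    nlinarith [hP2, habsS, hnn]
  nlinarith [hP1, h1,
    mul_nonneg (norm_nonneg (cexp (-↑π * I * (z0 q z) ^ 2 / tau q))) hnn]

end ThetaAux


theorem abs_thetaStar_gt_left_b_ge_a (q : ℝ) (hq1 : 0.30925 < q) (hq2 : q < 1)
    (a b : ℝ) (ha : 0 < a) (hb : max a 132 ≤ b) (z : ℂ) (hz : z = -a + b * I) :
    ‖ThetaStar q z‖ > ‖Gfun q z‖ ∧ partialTheta q z ≠ 0 := by
  have hq0 : (0:ℝ) < q := lt_trans (by norm_num) hq1
  have hb132 : (132:ℝ) ≤ b := le_trans (le_max_right a 132) hb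
  have hab : a ≤ b := le_trans (le_max_left a 132) hb
  have hre : z.re = -a := by rw [hz]; simp
  have him : z.im = b := by rw [hz]; simp
  have hz0 : z ≠ 0 := by
    intro h
    rw [h] at him
    simp at him
    linarith
  have habs : 132 ≤ ‖z‖ := by
    have h1 := Complex.abs_im_le_norm z
    rw [him] at h1
    have h2 := le_abs_self b
    linarith
  have hargn : 0 ≤ z.arg := Complex.arg_nonneg_iff.2 (by rw [him]; linarith)
  have harg : z.arg ≤ 3 * π / 4 :=
    ThetaAux.arg_le hz0 (by rw [hre]; linarith) (by rw [him]; linarith)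
      (by rw [hre, him]; linarith)
  have hlow := ThetaAux.theta_lower hq1 hq2 hz0 habs harg hargn
  have hG := ThetaAux.Gfun_bound hq0 hq2 habs
  have hgt : ‖ThetaStar q z‖ > ‖Gfun q z‖ := by
    calc ‖Gfun q z‖ ≤ 1 / 131 := hG
    _ < 17 / 19 := by norm_num
    _ ≤ ‖ThetaStar q z‖ := hlow
  refine ⟨hgt, ?_⟩
  intro h0
  have hsplit := ThetaAux.split_eq hq0 hq2 hz0
  rw [h0, zero_add] at hsplit
  rw [hsplit] at hgt
  exact lt_irrefl _ hgt
end

section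
/- Let n ≥ 3 be an integer, let q ∈ (1 - 1/(n-1), 1 - 1/n], and let z ∈ ℂ with Re z ≥ 0. Then the finite product Π_{m=1}^n |1 + z·q^m| satisfies Π_{m=1}^n |1 + z·q^m| ≥ |z|^n · 2^{-(n+3)}. -/
private lemma bin' (a : ℕ) : ∀ k : ℕ, a^(k+1) + (k+1)*a^k ≤ (a+1)^(k+1) := by
  intro k
  induction k with
  | zero => simp
  | succ k ih =>
    have h1 : (a+1)^(k+2) = (a+1)^(k+1) * (a+1) := by ring
    rw [h1]
    calc a^(k+2) + (k+2)*a^(k+1) ≤ (a^(k+1) + (k+1)*a^k) * (a+1) := by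
          have e1 : a^(k+2) = a^(k+1)*a := by ring
          have e2 : a^(k+1) = a^k*a := by ring
          nlinarith [Nat.zero_le (a^k), Nat.zero_le (a^(k+1))]
    _ ≤ (a+1)^(k+1) * (a+1) := Nat.mul_le_mul_right _ ih

private lemma nat_key' : ∀ k : ℕ, (k+2)^(k+2) ≤ 4*(k+1)^(k+2) := by
  intro k
  induction k with
  | zero => norm_num
  | succ k ih =>
    have hb := bin' ((k+1)*(k+3)) (k+1)
    have ha1 : (k+1)*(k+3) + 1 = (k+2)^2 := by ring
    rw [ha1] at hb
    have key : (k+3)*((k+1)*(k+3))^(k+2) ≤ (k+2) * ((k+2)^2)^(k+2) := by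
      have h2 : (k+3)*((k+1)*(k+3))^(k+2)
          = (k+2)*((k+1)*(k+3))^(k+2) + ((k+1)*(k+3))*((k+1)*(k+3))^(k+1) := by ring
      have h3 : (k+1)*(k+3) ≤ (k+2)^2 := by nlinarith
      calc (k+3)*((k+1)*(k+3))^(k+2)
          = (k+2)*((k+1)*(k+3))^(k+2) + ((k+1)*(k+3))*((k+1)*(k+3))^(k+1) := h2
        _ ≤ (k+2)*((k+1)*(k+3))^(k+2) + (k+2)^2*((k+1)*(k+3))^(k+1) :=
            Nat.add_le_add_left (Nat.mul_le_mul_right _ h3) _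
        _ = (k+2)*(((k+1)*(k+3))^(k+2) + (k+2)*((k+1)*(k+3))^(k+1)) := by ring
        _ ≤ (k+2)*(((k+2)^2)^(k+2)) := Nat.mul_le_mul_left _ hb
    have E1 : (k+2) * ((k+2)^2)^(k+2) = (k+2)^(k+3) * (k+2)^(k+2) := by
      rw [← pow_mul, ← pow_succ', ← pow_add]; congr 1; omega
    have main : (k+3)^(k+3) * (k+1)^(k+2) ≤ (4*(k+2)^(k+3)) * (k+1)^(k+2) := by
      calc (k+3)^(k+3) * (k+1)^(k+2) = (k+3)*((k+1)*(k+3))^(k+2) := by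
            rw [mul_pow]; ring
        _ ≤ (k+2) * ((k+2)^2)^(k+2) := key
        _ = (k+2)^(k+3)*(k+2)^(k+2) := E1
        _ ≤ (k+2)^(k+3) * (4*(k+1)^(k+2)) := Nat.mul_le_mul_left _ ih
        _ = (4*(k+2)^(k+3)) * (k+1)^(k+2) := by ring
    exact Nat.le_of_mul_le_mul_right main (by positivity)

private lemma gauss' : ∀ n : ℕ, (∑ i ∈ Finset.Icc 1 n, i) * 2 = n * (n+1) := by
  intro n
  induction n with
  | zero => simp
  | succ n ih =>
    rw [Finset.sum_Icc_succ_top (by omega)]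
    ring_nf
    ring_nf at ih
    omega

private lemma abs_one_add_ge' (w : ℂ) (hw : 0 ≤ w.re) :
    ‖w‖ ≤ ‖1 + w‖ := by
  rw [Complex.norm_def, Complex.norm_def]
  apply Real.sqrt_le_sqrt
  simp only [Complex.normSq_apply, Complex.add_re, Complex.add_im, Complex.one_re,
    Complex.one_im]
  nlinarith

theorem prod_abs_one_add_z_qpow_ge (n : ℕ) (hn : 3 ≤ n) (q : ℝ)
    (hq1 : 1 - 1 / ((n : ℝ) - 1) < q) (hq2 : q ≤ 1 - 1 / n)
    (z : ℂ) (hre : 0 ≤ z.re) :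
    ∏ m ∈ Finset.Icc 1 n, ‖1 + z * (q : ℂ) ^ m‖ ≥
      ‖z‖ ^ n * 2 ^ (-((n : ℤ) + 3)) := by
  have hn3 : (3:ℝ) ≤ (n:ℝ) := by exact_mod_cast hn
  have hn1 : (2:ℝ) ≤ (n:ℝ) - 1 := by linarith
  have hq0 : 0 < q := by
    have h1 : 1/((n:ℝ)-1) ≤ 1/2 := by
      apply one_div_le_one_div_of_le <;> linarith
    linarith
  have hqlt1 : q < 1 := by
    have : 0 < 1/(n:ℝ) := by positivity
    linarith
  -- lower bound on each factor
  have h1 : ∀ m ∈ Finset.Icc 1 n, ‖z‖ * q^m ≤ ‖1 + z*(q:ℂ)^m‖ := by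
    intro m _
    have he : ‖z‖ * q^m = ‖z * (q:ℂ)^m‖ := by
      rw [norm_mul, norm_pow, Complex.norm_real, Real.norm_eq_abs, abs_of_nonneg hq0.le]
    rw [he]
    apply abs_one_add_ge'
    rw [← Complex.ofReal_pow, Complex.mul_re, Complex.ofReal_re, Complex.ofReal_im]
    simp only [mul_zero, sub_zero]
    exact mul_nonneg hre (by positivity)
  set S := ∑ i ∈ Finset.Icc 1 n, i with hS
  have hprodeq : ∏ m ∈ Finset.Icc 1 n, (‖z‖ * q^m)
      = ‖z‖ ^ n * q^S := by
    rw [Finset.prod_mul_distrib, Finset.prod_const, Nat.card_Icc, Finset.prod_pow_eq_pow_sum]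
    simp [hS]
  -- key: 2^(-(n+3)) ≤ q^S
  have hkey : (2:ℝ) ^ (-((n : ℤ) + 3)) ≤ q^S := by
    have hz : -((n:ℤ)+3) = -(((n+3 : ℕ)) : ℤ) := by push_cast; ring
    rw [hz, zpow_neg, zpow_natCast]
    -- q^(n-1) ≥ 1/4
    have hq14 : (1:ℝ)/4 ≤ q^(n-1) := by
      have hnk := nat_key' (n-3)
      have e1 : n - 3 + 2 = n - 1 := by omega
      have e2 : n - 3 + 1 = n - 2 := by omega
      rw [e1, e2] at hnk
      have hcast : ((n-1 : ℕ):ℝ)^(n-1) ≤ 4*((n-2 : ℕ):ℝ)^(n-1) := by exact_mod_cast hnk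
      have c1 : ((n-1 : ℕ):ℝ) = (n:ℝ) - 1 := by
        push_cast [Nat.cast_sub (by omega : 1 ≤ n)]; ring
      have c2 : ((n-2 : ℕ):ℝ) = (n:ℝ) - 2 := by
        push_cast [Nat.cast_sub (by omega : 2 ≤ n)]; ring
      rw [c1, c2] at hcast
      have hqge : ((n:ℝ)-2)/((n:ℝ)-1) ≤ q := by
        have : 1 - 1/((n:ℝ)-1) = ((n:ℝ)-2)/((n:ℝ)-1) := by
          field_simp
          ring
        linarith [hq1, this.symm.le]
      have hfge : (1:ℝ)/4 ≤ (((n:ℝ)-2)/((n:ℝ)-1))^(n-1) := by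
        rw [div_pow, le_div_iff₀ (by positivity)]
        linarith
      calc (1:ℝ)/4 ≤ (((n:ℝ)-2)/((n:ℝ)-1))^(n-1) := hfge
        _ ≤ q^(n-1) := by
            apply pow_le_pow_left₀ (by apply div_nonneg <;> linarith) hqge
    -- exponent comparison: n*(n+1) ≤ (n-1)*(n+3)
    have hexp : n*(n+1) ≤ (n-1)*(n+3) := by
      obtain ⟨m, rfl⟩ : ∃ m, n = m + 3 := ⟨n-3, by omega⟩
      have e : m + 3 - 1 = m + 2 := by omega
      rw [e]
      nlinarith
    -- squared inequality
    have hsq : (((2:ℝ)^(n+3))⁻¹)^2 ≤ (q^S)^2 := by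
      have hqS2 : (q^S)^2 = q^(n*(n+1)) := by
        rw [← pow_mul, hS, gauss' n]
      have hc2 : (((2:ℝ)^(n+3))⁻¹)^2 = ((4:ℝ)^(n+3))⁻¹ := by
        have h22 : ((2:ℝ)^(n+3))^2 = (4:ℝ)^(n+3) := by
          rw [← pow_mul, mul_comm, pow_mul]; norm_num
        rw [inv_pow, h22]
      rw [hqS2, hc2]
      calc ((4:ℝ)^(n+3))⁻¹ = ((1:ℝ)/4)^(n+3) := by
            rw [one_div, inv_pow]
        _ ≤ (q^(n-1))^(n+3) := pow_le_pow_left₀ (by norm_num) hq14 _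
        _ = q^((n-1)*(n+3)) := by rw [← pow_mul]
        _ ≤ q^(n*(n+1)) := pow_le_pow_of_le_one hq0.le hqlt1.le hexp
    exact (pow_le_pow_iff_left₀ (by positivity) (by positivity) two_ne_zero).mp hsq
  calc ∏ m ∈ Finset.Icc 1 n, ‖1 + z * (q : ℂ) ^ m‖
      ≥ ∏ m ∈ Finset.Icc 1 n, (‖z‖ * q^m) :=
        Finset.prod_le_prod (fun m _ => by positivity) h1
    _ = ‖z‖ ^ n * q^S := hprodeq
    _ ≥ ‖z‖ ^ n * 2 ^ (-((n : ℤ) + 3)) :=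
        mul_le_mul_of_nonneg_left hkey (by positivity)
end
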